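/- Let t ≥ 2 and n ≥ 1 be integers and let λ be a t-core of length at most tn. Then the rank of λ equals Σ_{i=0}^{t−1} max(n_i(λ,tn) − n, 0). -/

import Mathlib

open BigOperators

/-- The beta set of a partition `lam` of length at most `m`:
`β_j(λ) = λ_j + m - j` (0-indexed: `β j = λ j + (m - 1 - j)`). -/
def betaSet (m : ℕ) (lam : Fin m → ℕ) (j : Fin m) : ℕ :=
  lam j + (m - 1 - (j : ℕ))

/-- `n_i(λ, m)`: the number of entries of the beta set congruent to `i` mod `t`. -/
def ncount (t m : ℕ) (lam : Fin m → ℕ) (i : ℕ) : ℕ :=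
  (Finset.univ.filter fun j : Fin m => betaSet m lam j % t = i).card

/-- `λ` is a `t`-core: whenever a beta number is `≥ t`, the beta number `β - t` also
occurs (equivalently, no hook length of `λ` equals `t`). -/
def IsTCore (t m : ℕ) (lam : Fin m → ℕ) : Prop :=
  ∀ j : Fin m, t ≤ betaSet m lam j →
    ∃ k : Fin m, betaSet m lam k = betaSet m lam j - t

/-- The (Frobenius) rank of a partition: `max {k : λ_k ≥ k}` (`0` for the empty
partition). -/
def rankP (m : ℕ) (lam : Fin m → ℕ) : ℕ :=
  (Finset.univ.filter fun j : Fin m => (j : ℕ) + 1 ≤ lam j).sup fun j => (j : ℕ) + 1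

/-- A finset of naturals closed under predecessor is an initial segment. -/
lemma dc_eq_range (S : Finset ℕ) (h : ∀ k, k + 1 ∈ S → k ∈ S) :
    S = Finset.range S.card := by
  have hsub : ∀ d x, x ∈ S → x - d ∈ S := by
    intro d
    induction d with
    | zero => simp only [Nat.sub_zero]; exact fun x hx => hx
    | succ d ih =>
      intro x hx
      have h1 := ih x hx
      rcases Nat.eq_zero_or_pos (x - d) with h0 | h0
      · have : x - (d + 1) = x - d := by omega
        rw [this]; exact h1
      · have : x - d = (x - (d + 1)) + 1 := by omega
        rw [this] at h1
        exact h _ h1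
  have hS : S ⊆ Finset.range S.card := by
    intro x hx
    have hsubset : Finset.range (x + 1) ⊆ S := by
      intro y hy
      simp only [Finset.mem_range] at hy
      have hy' : y = x - (x - y) := by omega
      rw [hy']; exact hsub _ _ hx
    have := Finset.card_le_card hsubset
    simp only [Finset.card_range] at this
    simp only [Finset.mem_range]
    omega
  exact Finset.eq_of_subset_of_card_le hS (by simp)

lemma sup_range_add_one (c : ℕ) : (Finset.range c).sup (fun j => j + 1) = c := by
  induction c with
  | zero => simp
  | succ c ih =>
    rw [Finset.range_add_one, Finset.sup_insert, ih]
    exact sup_eq_left.mpr (by omega)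

lemma rank_tcore_aux
    (t n m : ℕ) (ht : 2 ≤ t) (hn : 1 ≤ n) (hm : m = t * n)
    (lam : Fin m → ℕ)
    (hanti : ∀ j k : Fin m, j ≤ k → lam k ≤ lam j)
    (hcore : IsTCore t m lam) :
    rankP m lam = ∑ i ∈ Finset.range t, (ncount t m lam i - n) := by
  classical
  have htpos : 0 < t := by omega
  have hmpos : 0 < m := by rw [hm]; positivity
  have hβdef : ∀ j : Fin m, betaSet m lam j = lam j + (m - 1 - (j : ℕ)) :=
    fun j => rfl
  have hinj : Function.Injective (betaSet m lam) := by
    intro j k hjk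
    by_contra hne
    rcases Ne.lt_or_gt (fun h : j = k => hne h) with hlt | hlt
    · have h1 : lam k ≤ lam j := hanti j k hlt.le
      have h2 : (j : ℕ) < k := hlt
      have h3 : (k : ℕ) < m := k.isLt
      rw [hβdef, hβdef] at hjk
      omega
    · have h1 : lam j ≤ lam k := hanti k j hlt.le
      have h2 : (k : ℕ) < j := hlt
      have h3 : (j : ℕ) < m := j.isLt
      rw [hβdef, hβdef] at hjk
      omega
  set B := Finset.univ.image (betaSet m lam) with hB
  -- ncount equals card of residue fiber of B
  have hnc : ∀ i : ℕ, ncount t m lam i = (B.filter (fun x => x % t = i)).card := by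
    intro i
    rw [hB, Finset.filter_image, Finset.card_image_of_injective _ hinj]
    rfl
  -- the fiber over residue i is an arithmetic progression starting at i
  have hfiber : ∀ i : ℕ, i < t →
      B.filter (fun x => x % t = i)
        = (Finset.range (ncount t m lam i)).image (fun k => t * k + i) := by
    intro i hi
    set Bi := B.filter (fun x => x % t = i) with hBi
    have hKcard : (Bi.image (fun x => x / t)).card = ncount t m lam i := by
      rw [Finset.card_image_of_injOn, hnc]
      intro x hx y hy hxy
      simp only [Finset.mem_coe, hBi, Finset.mem_filter] at hx hy
      have hx' := Nat.div_add_mod x t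
      have hy' := Nat.div_add_mod y t
      rw [hx.2] at hx'
      rw [hy.2] at hy'
      simp only at hxy
      rw [← hx', ← hy', hxy]
    have hdc : ∀ k, k + 1 ∈ Bi.image (fun x => x / t) → k ∈ Bi.image (fun x => x / t) := by
      intro k hk
      simp only [Finset.mem_image] at hk
      obtain ⟨x, hxBi, hxdiv⟩ := hk
      simp only [hBi, Finset.mem_filter] at hxBi
      obtain ⟨hxB, hxmod⟩ := hxBi
      have hx : x = t * (k + 1) + i := by
        have := Nat.div_add_mod x t
        rw [hxdiv, hxmod] at this
        omega
      rw [hB, Finset.mem_image] at hxB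
      obtain ⟨j, _, hj⟩ := hxB
      have htx : t ≤ betaSet m lam j := by
        rw [hj, hx]
        have : t * 1 ≤ t * (k + 1) := Nat.mul_le_mul_left t (by omega)
        omega
      obtain ⟨j', hj'⟩ := hcore j htx
      have hxj' : betaSet m lam j' = t * k + i := by
        rw [hj', hj, hx]
        have : t * (k + 1) = t * k + t := by ring
        omega
      simp only [Finset.mem_image]
      refine ⟨t * k + i, ?_, ?_⟩
      · simp only [hBi, Finset.mem_filter]
        constructor
        · rw [hB, Finset.mem_image]
          exact ⟨j', Finset.mem_univ _, hxj'⟩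
        · simp [Nat.mul_add_mod, Nat.mod_eq_of_lt hi]
      · rw [Nat.mul_add_div htpos, Nat.div_eq_of_lt hi]
        omega
    have hKr : Bi.image (fun x => x / t) = Finset.range (ncount t m lam i) := by
      rw [← hKcard]; exact dc_eq_range _ hdc
    have hid : ∀ x ∈ Bi, ((fun k => t * k + i) ∘ (fun x => x / t)) x = id x := by
      intro x hx
      simp only [hBi, Finset.mem_filter] at hx
      have := Nat.div_add_mod x t
      rw [hx.2] at this
      simp only [Function.comp, id]
      omega
    calc Bi = Bi.image id := (Finset.image_id).symm
      _ = Bi.image ((fun k => t * k + i) ∘ (fun x => x / t)) :=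
          (Finset.image_congr hid).symm
      _ = (Bi.image (fun x => x / t)).image (fun k => t * k + i) :=
          (Finset.image_image).symm
      _ = (Finset.range (ncount t m lam i)).image (fun k => t * k + i) := by
          rw [hKr]
  -- rank computation
  set F := Finset.univ.filter (fun j : Fin m => (j : ℕ) + 1 ≤ lam j) with hF
  set F' := F.image (fun j : Fin m => (j : ℕ)) with hF'
  have hFcard : F'.card = F.card :=
    Finset.card_image_of_injective _ Fin.val_injective
  have hFdc : ∀ k, k + 1 ∈ F' → k ∈ F' := by
    intro k hk
    simp only [hF', Finset.mem_image] at hk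
    obtain ⟨j, hjF, hjv⟩ := hk
    simp only [hF, Finset.mem_filter] at hjF
    have hkm : k < m := by have := j.isLt; omega
    refine Finset.mem_image.mpr ⟨⟨k, hkm⟩, ?_, rfl⟩
    simp only [hF, Finset.mem_filter]
    refine ⟨Finset.mem_univ _, ?_⟩
    have hle : (⟨k, hkm⟩ : Fin m) ≤ j := by
      rw [Fin.le_def]
      show k ≤ (j : ℕ)
      omega
    have h2 := hanti _ _ hle
    calc ((⟨k, hkm⟩ : Fin m) : ℕ) + 1 = k + 1 := rfl
      _ ≤ lam j := by omega
      _ ≤ lam ⟨k, hkm⟩ := h2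
  have hFr : F' = Finset.range F.card := by
    rw [← hFcard]; exact dc_eq_range F' hFdc
  have hrank : rankP m lam = F.card := by
    unfold rankP
    rw [← hF]
    have h1 : F.sup (fun j => (j : ℕ) + 1) = F'.sup (fun x => x + 1) := by
      rw [hF', Finset.sup_image]
      rfl
    rw [h1, hFr, sup_range_add_one]
  -- F.card = number of beta numbers ≥ m
  have hFB : F.card = (B.filter (fun x => m ≤ x)).card := by
    rw [hB, Finset.filter_image, Finset.card_image_of_injective _ hinj, hF]
    congr 1
    apply Finset.filter_congr
    intro j _
    have hjm : (j : ℕ) < m := j.isLt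
    rw [hβdef]
    omega
  -- split by residue
  have hsplit : (B.filter (fun x => m ≤ x)).card
      = ∑ i ∈ Finset.range t,
          ((B.filter (fun x => m ≤ x)).filter (fun x => x % t = i)).card := by
    apply Finset.card_eq_sum_card_fiberwise
    intro x _
    exact Finset.mem_range.mpr (Nat.mod_lt x htpos)
  have hterm : ∀ i ∈ Finset.range t,
      ((B.filter (fun x => m ≤ x)).filter (fun x => x % t = i)).card
        = ncount t m lam i - n := by
    intro i hi
    rw [Finset.mem_range] at hi
    have hcomm : (B.filter (fun x => m ≤ x)).filter (fun x => x % t = i)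
        = (B.filter (fun x => x % t = i)).filter (fun x => m ≤ x) := by
      rw [Finset.filter_filter, Finset.filter_filter]
      apply Finset.filter_congr
      intro x _
      tauto
    rw [hcomm, hfiber i hi, Finset.filter_image]
    rw [Finset.card_image_of_injOn]
    · have hiff : ∀ k, (m ≤ t * k + i) ↔ n ≤ k := by
        intro k
        constructor
        · intro h
          by_contra hlt
          push_neg at hlt
          have h1 : k + 1 ≤ n := hlt
          have h2 : t * (k + 1) ≤ t * n := Nat.mul_le_mul_left t h1
          have h3 : t * (k + 1) = t * k + t := by ring
          omega
        · intro h
          have : t * n ≤ t * k := Nat.mul_le_mul_left t h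
          omega
      have heq : (Finset.range (ncount t m lam i)).filter (fun k => m ≤ t * k + i)
          = Finset.Ico n (ncount t m lam i) := by
        ext x
        simp only [Finset.mem_filter, Finset.mem_range, Finset.mem_Ico, hiff]
        tauto
      rw [heq, Nat.card_Ico]
    · intro x _ y _ hxy
      simp only at hxy
      exact Nat.eq_of_mul_eq_mul_left htpos (by omega)
  rw [hrank, hFB, hsplit]
  exact Finset.sum_congr rfl hterm

/-- If `λ` is a `t`-core of length at most `tn`, then
`rank(λ) = Σ_{i=0}^{t-1} (n_i(λ, tn) - n)_+` (truncated subtraction). -/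
theorem rank_tcore_eq_sum
    (t n : ℕ) (ht : 2 ≤ t) (hn : 1 ≤ n)
    (lam : Fin (t * n) → ℕ)
    (hanti : ∀ j k : Fin (t * n), j ≤ k → lam k ≤ lam j)
    (hcore : IsTCore t (t * n) lam) :
    rankP (t * n) lam = ∑ i ∈ Finset.range t, (ncount t (t * n) lam i - n) := by
  exact rank_tcore_aux t n (t * n) ht hn rfl lam hanti hcore
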